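/- Let (𝕏, 𝔅, μ, S) be an outer space whose generated outer measure is σ-finite, valued in a topological vector space X. Let 𝔪 be a positive Borel measure on 𝕏 such that: (i) there is C < ∞ with ‖∫_B F d𝔪‖_X ≤ C ‖F‖_{S(B)} μ(B) for every generating set B ∈ 𝔅 and every F ∈ L¹(B, 𝔪|_B; X); and (ii) μ(A) = 0 implies 𝔪(A) = 0 for Borel A. Then ‖∫_𝕏 F d𝔪‖_X ≲ C ‖F‖_{L¹_μ S} for all F ∈ L¹(𝕏, 𝔪; X). -/

import Mathlib

set_option autoImplicit false

open MeasureTheory ProbabilityTheory ENNReal Set Filter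

noncomputable section

universe u v w

/-- An outer space: a σ-generating collection of Borel sets, a local measure, and a local
size on a topological (here: measurable) space, valued in a normed space `X`. -/
structure OuterSpace (𝕏 : Type u) [MeasurableSpace 𝕏] (X : Type v)
    [NormedAddCommGroup X] [NormedSpace ℝ X] where
  gen : Set (Set 𝕏)
  gen_meas : ∀ B ∈ gen, MeasurableSet B
  gen_covers : ∃ c : ℕ → Set 𝕏, (∀ n, c n ∈ gen) ∧ (⋃ n, c n) = Set.univ
  lm : Set 𝕏 → ℝ≥0∞
  lm_empty : lm ∅ = 0
  lm_subadd : ∀ B ∈ gen, ∀ c : ℕ → Set 𝕏, (∀ n, c n ∈ gen) → B ⊆ (⋃ n, c n) →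
    lm B ≤ ∑' n, lm (c n)
  size : Set 𝕏 → (𝕏 → X) → ℝ≥0∞
  size_smul : ∀ B ∈ gen, ∀ (F : 𝕏 → X) (a : ℝ), size B (a • F) = (‖a‖₊ : ℝ≥0∞) * size B F
  size_posdef : ∀ F : 𝕏 → X, (∀ B ∈ gen, size B F = 0) ↔ F = 0
  size_tri : ∃ K : ℝ≥0∞, 1 ≤ K ∧ ∀ B ∈ gen, ∀ F G : 𝕏 → X,
    size B (F + G) ≤ K * (size B F + size B G)

namespace OuterSpace

variable {𝕏 : Type u} [MeasurableSpace 𝕏] {X : Type v}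
  [NormedAddCommGroup X] [NormedSpace ℝ X] (O : OuterSpace 𝕏 X)

/-- Outer measure generated by the local measure via countable covers. -/
def outerMeasure (E : Set 𝕏) : ℝ≥0∞ :=
  ⨅ (c : ℕ → Set 𝕏) (_ : ∀ n, c n ∈ O.gen) (_ : E ⊆ ⋃ n, c n), ∑' n, O.lm (c n)

/-- The collection `𝔅^∪` of countable unions of generating sets. -/
def unions : Set (Set 𝕏) := {V | ∃ c : ℕ → Set 𝕏, (∀ n, c n ∈ O.gen) ∧ V = ⋃ n, c n}

/-- Outer size (outer supremum) of `F`. -/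
def outerSize (F : 𝕏 → X) : ℝ≥0∞ :=
  ⨆ (B ∈ O.gen) (V ∈ O.unions), O.size B (Set.indicator Vᶜ F)

/-- Super-level outer measure `μ(‖F‖_S > λ)`. -/
def superLevel (F : 𝕏 → X) (lam : ℝ≥0∞) : ℝ≥0∞ :=
  ⨅ (V ∈ O.unions) (_ : O.outerSize (Set.indicator Vᶜ F) ≤ lam), O.outerMeasure V

/-- Outer Lebesgue quasinorm `‖F‖_{L^p_μ S}` (for `p = ∞` this is the outer size). -/
def lpNorm (p : ℝ≥0∞) (F : 𝕏 → X) : ℝ≥0∞ :=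
  if p = ⊤ then O.outerSize F
  else (∫⁻ lam in Set.Ioi (0:ℝ),
      ENNReal.ofReal (lam ^ (p.toReal - 1)) * O.superLevel F (ENNReal.ofReal lam)) ^ (1 / p.toReal)

/-- Weak outer Lebesgue quasinorm `‖F‖_{L^{p,∞}_μ S}`. -/
def lpWeakNorm (p : ℝ≥0∞) (F : 𝕏 → X) : ℝ≥0∞ :=
  if p = ⊤ then O.outerSize F
  else ⨆ (lam : ℝ) (_ : 0 < lam),
    ENNReal.ofReal lam * (O.superLevel F (ENNReal.ofReal lam)) ^ (1 / p.toReal)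

end OuterSpace

/-! ### Auxiliary lemmas -/

open scoped NNReal

lemma aux_ofReal_two_zpow (k : ℤ) : ENNReal.ofReal ((2:ℝ) ^ k) = (2 : ℝ≥0∞) ^ k := by
  have h1 : (2:ℝ) ^ k = (((2:ℝ≥0) ^ k : ℝ≥0) : ℝ) := by
    rw [NNReal.coe_zpow, NNReal.coe_ofNat]
  rw [h1, ENNReal.ofReal_coe_nnreal, ENNReal.coe_zpow (by norm_num)]
  norm_num

lemma aux_ofReal_norm_tsum_le {ι : Type*} {X : Type*} [NormedAddCommGroup X]
    {a : ι → X} {s : X} (h : HasSum a s) :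
    ENNReal.ofReal ‖s‖ ≤ ∑' i, ENNReal.ofReal ‖a i‖ := by
  by_cases htop : (∑' i, ENNReal.ofReal ‖a i‖) = ⊤
  · rw [htop]; exact le_top
  have hco : ∀ i, ENNReal.ofReal ‖a i‖ = ((‖a i‖₊ : ℝ≥0) : ℝ≥0∞) := fun i =>
    ENNReal.ofReal_eq_coe_nnreal (norm_nonneg _)
  have hsummable : Summable fun i => ‖a i‖ := by
    have h2 : Summable fun i => (‖a i‖₊ : ℝ≥0) := ENNReal.tsum_coe_ne_top_iff_summable.mp
        (by simpa only [hco] using htop)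
    simpa [← NNReal.summable_coe, coe_nnnorm] using h2
  have hs : ‖s‖ ≤ ∑' i, ‖a i‖ := by
    rw [← h.tsum_eq]; exact norm_tsum_le_tsum_norm hsummable
  calc ENNReal.ofReal ‖s‖ ≤ ENNReal.ofReal (∑' i, ‖a i‖) := ENNReal.ofReal_le_ofReal hs
    _ = ∑' i, ENNReal.ofReal ‖a i‖ :=
        ENNReal.ofReal_tsum_of_nonneg (fun _ => norm_nonneg _) hsummable

section AuxIntegral

variable (sl : ℝ≥0∞ → ℝ≥0∞) (hanti : ∀ {a b : ℝ≥0∞}, a ≤ b → sl b ≤ sl a)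
include hanti

lemma aux_mul_le_lintegral {t : ℝ} (ht : 0 < t) :
    ENNReal.ofReal t * sl (ENNReal.ofReal t) ≤
      ∫⁻ u in Set.Ioi (0:ℝ), sl (ENNReal.ofReal u) := by
  have h1 : ENNReal.ofReal t * sl (ENNReal.ofReal t)
      = ∫⁻ _ in Set.Ioc (0:ℝ) t, sl (ENNReal.ofReal t) := by
    rw [setLIntegral_const, Real.volume_Ioc, mul_comm]
    simp
  rw [h1]
  calc ∫⁻ _ in Set.Ioc (0:ℝ) t, sl (ENNReal.ofReal t)
      ≤ ∫⁻ u in Set.Ioc (0:ℝ) t, sl (ENNReal.ofReal u) := by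
        refine lintegral_mono_ae ?_
        refine (ae_restrict_iff' measurableSet_Ioc).2 (ae_of_all _ fun u hu => ?_)
        exact hanti (ENNReal.ofReal_le_ofReal hu.2)
    _ ≤ ∫⁻ u in Set.Ioi (0:ℝ), sl (ENNReal.ofReal u) :=
        lintegral_mono' (Measure.restrict_mono Set.Ioc_subset_Ioi_self le_rfl) le_rfl

lemma aux_tsum_zpow_le :
    ∑' k : ℤ, (2:ℝ≥0∞) ^ k * sl (ENNReal.ofReal ((2:ℝ) ^ k)) ≤
      2 * ∫⁻ u in Set.Ioi (0:ℝ), sl (ENNReal.ofReal u) := by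
  have hIoi : Set.Ioi (0:ℝ) = ⋃ k : ℤ, Set.Ioc ((2:ℝ)^k) ((2:ℝ)^(k+1)) := by
    ext x
    simp only [Set.mem_Ioi, Set.mem_iUnion, Set.mem_Ioc]
    constructor
    · intro hx
      obtain ⟨n, hn⟩ := exists_mem_Ioc_zpow hx one_lt_two
      exact ⟨n, hn.1, hn.2⟩
    · rintro ⟨k, h1, _⟩
      exact lt_trans (zpow_pos (by norm_num) k) h1
  have hdisj : Pairwise (Function.onFun Disjoint fun k : ℤ => Set.Ioc ((2:ℝ)^k) ((2:ℝ)^(k+1))) := by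
    intro k k' hkk'
    rcases lt_or_gt_of_ne hkk' with h | h
    · apply Set.Ioc_disjoint_Ioc.2
      calc min ((2:ℝ)^(k+1)) ((2:ℝ)^(k'+1)) ≤ (2:ℝ)^(k+1) := min_le_left _ _
        _ ≤ (2:ℝ)^k' := zpow_le_zpow_right₀ one_le_two h
        _ ≤ max ((2:ℝ)^k) ((2:ℝ)^k') := le_max_right _ _
    · apply Set.Ioc_disjoint_Ioc.2
      calc min ((2:ℝ)^(k+1)) ((2:ℝ)^(k'+1)) ≤ (2:ℝ)^(k'+1) := min_le_right _ _
        _ ≤ (2:ℝ)^k := zpow_le_zpow_right₀ one_le_two h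
        _ ≤ max ((2:ℝ)^k) ((2:ℝ)^k') := le_max_left _ _
  have hsplit : (∫⁻ u in Set.Ioi (0:ℝ), sl (ENNReal.ofReal u)) =
      ∑' k : ℤ, ∫⁻ u in Set.Ioc ((2:ℝ)^k) ((2:ℝ)^(k+1)), sl (ENNReal.ofReal u) := by
    rw [hIoi, lintegral_iUnion (fun _ => measurableSet_Ioc) hdisj]
  have hpiece : ∀ k : ℤ, (2:ℝ≥0∞)^k * sl (ENNReal.ofReal ((2:ℝ)^(k+1))) ≤
      ∫⁻ u in Set.Ioc ((2:ℝ)^k) ((2:ℝ)^(k+1)), sl (ENNReal.ofReal u) := by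
    intro k
    have h2 : (2:ℝ≥0∞)^k * sl (ENNReal.ofReal ((2:ℝ)^(k+1)))
        = ∫⁻ _ in Set.Ioc ((2:ℝ)^k) ((2:ℝ)^(k+1)), sl (ENNReal.ofReal ((2:ℝ)^(k+1))) := by
      rw [setLIntegral_const, Real.volume_Ioc, mul_comm]
      congr 1
      rw [show (2:ℝ)^(k+1) - (2:ℝ)^k = (2:ℝ)^k by
        rw [zpow_add_one₀ (by norm_num : (2:ℝ) ≠ 0)]; ring]
      exact (aux_ofReal_two_zpow k).symm
    rw [h2]
    refine lintegral_mono_ae ?_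
    refine (ae_restrict_iff' measurableSet_Ioc).2 (ae_of_all _ fun u hu => ?_)
    exact hanti (ENNReal.ofReal_le_ofReal hu.2)
  have hre : ∑' k : ℤ, (2:ℝ≥0∞) ^ k * sl (ENNReal.ofReal ((2:ℝ) ^ k))
      = ∑' k : ℤ, (2:ℝ≥0∞) ^ (k+1) * sl (ENNReal.ofReal ((2:ℝ) ^ (k+1))) :=
    (Equiv.tsum_eq (Equiv.addRight (1:ℤ))
      (fun k => (2:ℝ≥0∞) ^ k * sl (ENNReal.ofReal ((2:ℝ) ^ k)))).symm
  rw [hre]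
  have hterm : ∀ k : ℤ, (2:ℝ≥0∞) ^ (k+1) * sl (ENNReal.ofReal ((2:ℝ) ^ (k+1)))
      = 2 * ((2:ℝ≥0∞) ^ k * sl (ENNReal.ofReal ((2:ℝ) ^ (k+1)))) := by
    intro k
    rw [ENNReal.zpow_add (by norm_num) (by norm_num) k 1, zpow_one,
      mul_comm ((2:ℝ≥0∞)^k) 2, mul_assoc]
  rw [tsum_congr hterm, ENNReal.tsum_mul_left]
  rw [hsplit]
  gcongr with k
  exact hpiece k

end AuxIntegral

namespace OuterSpace

variable {𝕏 : Type u} [MeasurableSpace 𝕏] {X : Type v}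
  [NormedAddCommGroup X] [NormedSpace ℝ X] (O : OuterSpace 𝕏 X)

lemma aux_size_zero {B : Set 𝕏} (hB : B ∈ O.gen) : O.size B (0 : 𝕏 → X) = 0 := by
  have h := O.size_smul B hB (0 : 𝕏 → X) 0
  simpa using h

lemma aux_mem_unions_of_gen {B : Set 𝕏} (hB : B ∈ O.gen) : B ∈ O.unions :=
  ⟨fun _ => B, fun _ => hB, (Set.iUnion_const B).symm⟩

lemma aux_unions_iUnion {ι : Type} [Countable ι] [Nonempty ι] (v : ι → Set 𝕏)
    (hv : ∀ i, v i ∈ O.unions) : (⋃ i, v i) ∈ O.unions := by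
  choose c hc hce using hv
  obtain ⟨f, hf⟩ := exists_surjective_nat (ι × ℕ)
  refine ⟨fun n => c (f n).1 (f n).2, fun n => hc _ _, ?_⟩
  calc ⋃ i, v i = ⋃ p : ι × ℕ, c p.1 p.2 := by
        simp_rw [iUnion_prod']; exact iUnion_congr hce
    _ = ⋃ n, c (f n).1 (f n).2 := (hf.iUnion_comp _).symm

lemma aux_unions_union {V W : Set 𝕏} (hV : V ∈ O.unions) (hW : W ∈ O.unions) :
    V ∪ W ∈ O.unions := by
  rw [Set.union_eq_iUnion]
  exact O.aux_unions_iUnion _ (fun b => by cases b <;> simpa)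

lemma aux_meas_of_unions {V : Set 𝕏} (hV : V ∈ O.unions) : MeasurableSet V := by
  obtain ⟨c, hc, rfl⟩ := hV
  exact MeasurableSet.iUnion fun n => O.gen_meas _ (hc n)

lemma aux_size_indicator_le {B : Set 𝕏} (hB : B ∈ O.gen) {W : Set 𝕏} (hW : W ∈ O.unions)
    {V : Set 𝕏} (hVW : V ⊆ W) (F : 𝕏 → X) :
    O.size B (Set.indicator Wᶜ F) ≤ O.outerSize (Set.indicator Vᶜ F) := by
  have h1 : Set.indicator Wᶜ F = Set.indicator Wᶜ (Set.indicator Vᶜ F) := by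
    rw [Set.indicator_indicator, Set.inter_eq_left.mpr (Set.compl_subset_compl.mpr hVW)]
  rw [h1, outerSize]
  exact le_iSup₂_of_le B hB (le_iSup₂_of_le W hW le_rfl)

lemma aux_outerSize_indicator_mono {V W : Set 𝕏} (hV : V ∈ O.unions) (hW : W ∈ O.unions)
    (hVW : V ⊆ W) (F : 𝕏 → X) :
    O.outerSize (Set.indicator Wᶜ F) ≤ O.outerSize (Set.indicator Vᶜ F) := by
  rw [outerSize]
  refine iSup₂_le fun B hB => iSup₂_le fun U hU => ?_
  have h1 : Set.indicator Uᶜ (Set.indicator Wᶜ F) = Set.indicator (U ∪ W)ᶜ F := by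
    rw [Set.indicator_indicator, Set.compl_union]
  rw [h1]
  exact O.aux_size_indicator_le hB (O.aux_unions_union hU hW) (hVW.trans subset_union_right) F

lemma aux_superLevel_anti {F : 𝕏 → X} {lam lam' : ℝ≥0∞} (h : lam ≤ lam') :
    O.superLevel F lam' ≤ O.superLevel F lam := by
  rw [superLevel, superLevel]
  exact le_iInf₂ fun V hV => le_iInf fun hle =>
    iInf₂_le_of_le V hV (iInf_le_of_le (hle.trans h) le_rfl)

lemma aux_outerMeasure_le_of_cover {E : Set 𝕏} {c : ℕ → Set 𝕏} (hc : ∀ n, c n ∈ O.gen)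
    (hE : E ⊆ ⋃ n, c n) : O.outerMeasure E ≤ ∑' n, O.lm (c n) :=
  iInf_le_of_le c (iInf_le_of_le hc (iInf_le_of_le hE le_rfl))

lemma aux_outerMeasure_mono {E E' : Set 𝕏} (h : E ⊆ E') :
    O.outerMeasure E ≤ O.outerMeasure E' := by
  rw [outerMeasure, outerMeasure]
  exact le_iInf fun cov => le_iInf fun hcov => le_iInf fun hsub =>
    O.aux_outerMeasure_le_of_cover hcov (h.trans hsub)

lemma aux_exists_of_superLevel_lt {F : 𝕏 → X} {lam t : ℝ≥0∞} (h : O.superLevel F lam < t) :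
    ∃ V, V ∈ O.unions ∧ O.outerSize (Set.indicator Vᶜ F) ≤ lam ∧ O.outerMeasure V < t := by
  simp only [superLevel, iInf_lt_iff] at h
  obtain ⟨V, hV, hle, hlt⟩ := h
  exact ⟨V, hV, hle, hlt⟩

lemma aux_exists_cover_of_outerMeasure_lt {V : Set 𝕏} {t : ℝ≥0∞} (h : O.outerMeasure V < t) :
    ∃ c : ℕ → Set 𝕏, (∀ n, c n ∈ O.gen) ∧ V ⊆ (⋃ n, c n) ∧ ∑' n, O.lm (c n) < t := by
  simp only [outerMeasure, iInf_lt_iff] at h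
  obtain ⟨c, hc, hsub, hlt⟩ := h
  exact ⟨c, hc, hsub, hlt⟩

/-- Select a cover witnessing a super-level set at level `lam` with local-measure sum `< t`. -/
lemma aux_select {F : 𝕏 → X} {lam t : ℝ≥0∞} (h : O.superLevel F lam < t) :
    ∃ c : ℕ → Set 𝕏, (∀ n, c n ∈ O.gen) ∧
      O.outerSize (Set.indicator (⋃ n, c n)ᶜ F) ≤ lam ∧ ∑' n, O.lm (c n) < t := by
  obtain ⟨V, hVu, hVs, hVm⟩ := O.aux_exists_of_superLevel_lt h
  obtain ⟨c, hcg, hcsub, hcsum⟩ := O.aux_exists_cover_of_outerMeasure_lt hVm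
  refine ⟨c, hcg, ?_, hcsum⟩
  exact le_trans (O.aux_outerSize_indicator_mono hVu ⟨c, hcg, rfl⟩ hcsub F) hVs

lemma aux_vanish {F : 𝕏 → X} {W : Set 𝕏} (hW : W ∈ O.unions)
    (h : ∀ δ : ℝ≥0∞, 0 < δ → ∃ V ∈ O.unions, V ⊆ W ∧ O.outerSize (Set.indicator Vᶜ F) ≤ δ) :
    Set.indicator Wᶜ F = 0 := by
  rw [← O.size_posdef]
  intro B hB
  refine le_antisymm ?_ zero_le
  refine ENNReal.le_of_forall_pos_le_add fun ε hε _ => ?_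
  obtain ⟨V, hV, hVW, hsize⟩ := h ε (by exact_mod_cast hε)
  calc O.size B (Set.indicator Wᶜ F) ≤ O.outerSize (Set.indicator Vᶜ F) :=
        O.aux_size_indicator_le hB hW hVW F
    _ ≤ ε := hsize
    _ ≤ 0 + ε := by rw [zero_add]

lemma aux_lpNorm_one (F : 𝕏 → X) :
    O.lpNorm 1 F = ∫⁻ u in Set.Ioi (0:ℝ), O.superLevel F (ENNReal.ofReal u) := by
  rw [lpNorm, if_neg one_ne_top]
  simp [Real.rpow_zero]


lemma aux_zpow_neg_nat (n : ℕ) : (2:ℝ≥0∞) ^ (-(n:ℤ)) = (2⁻¹:ℝ≥0∞) ^ n := by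
  rw [ENNReal.zpow_neg, zpow_natCast, ← ENNReal.inv_pow]

lemma aux_tsum_geom_shift (j : ℤ) :
    ∑' n : ℕ, (2:ℝ≥0∞) ^ (-(j + (n:ℤ))) = (2:ℝ≥0∞) ^ (-j) * 2 := by
  have h : ∀ n : ℕ, (2:ℝ≥0∞) ^ (-(j + (n:ℤ))) = (2:ℝ≥0∞)^(-j) * (2⁻¹) ^ n := by
    intro n
    rw [neg_add, ENNReal.zpow_add (by norm_num) (by norm_num), aux_zpow_neg_nat]
  rw [tsum_congr h, ENNReal.tsum_mul_left, ENNReal.tsum_geometric, ENNReal.one_sub_inv_two]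
  norm_num

lemma aux_eq_zero_of_le_geom {x Cst : ℝ≥0∞} (hC : Cst ≠ ⊤)
    (h : ∀ m : ℕ, x ≤ Cst * (2⁻¹:ℝ≥0∞) ^ m) : x = 0 := by
  refine le_antisymm ?_ zero_le
  have h2 : Tendsto (fun m : ℕ => ((2⁻¹:ℝ≥0∞)) ^ m) atTop (nhds 0) :=
    ENNReal.tendsto_pow_atTop_nhds_zero_of_lt_one
      (by rw [ENNReal.inv_lt_one]; exact one_lt_two)
  have htend : Tendsto (fun m : ℕ => Cst * (2⁻¹:ℝ≥0∞) ^ m) atTop (nhds 0) := by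
    simpa using ENNReal.Tendsto.const_mul h2 (Or.inr hC)
  exact ge_of_tendsto' htend h

lemma aux_outerMeasure_le_tsum {E : Set 𝕏} {v : ℕ → Set 𝕏} {b : ℕ → ℝ≥0∞}
    (hE : E ⊆ ⋃ n, v n)
    (h : ∀ n, ∃ c : ℕ → Set 𝕏, (∀ i, c i ∈ O.gen) ∧ v n ⊆ ⋃ i, c i ∧ ∑' i, O.lm (c i) ≤ b n) :
    O.outerMeasure E ≤ ∑' n, b n := by
  choose c hg hsub hb using h
  set e : ℕ ≃ ℕ × ℕ := (Denumerable.eqv (ℕ × ℕ)).symm with he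
  have hcov : E ⊆ ⋃ j, c (e j).1 (e j).2 := by
    intro x hx
    obtain ⟨n, hn⟩ := mem_iUnion.mp (hE hx)
    obtain ⟨i, hi⟩ := mem_iUnion.mp (hsub n hn)
    refine mem_iUnion.mpr ⟨e.symm (n, i), ?_⟩
    rw [Equiv.apply_symm_apply]
    exact hi
  calc O.outerMeasure E ≤ ∑' j, O.lm (c (e j).1 (e j).2) :=
        O.aux_outerMeasure_le_of_cover (fun j => hg _ _) hcov
    _ = ∑' p : ℕ × ℕ, O.lm (c p.1 p.2) := Equiv.tsum_eq e (fun p => O.lm (c p.1 p.2))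
    _ = ∑' n, ∑' i, O.lm (c n i) := ENNReal.tsum_prod (f := fun n i => O.lm (c n i))
    _ ≤ ∑' n, b n := ENNReal.tsum_le_tsum fun n => hb n

variable [CompleteSpace X]

lemma aux_integral_zero_of_vanishing (𝔪 : Measure 𝕏)
    (hi : ∀ B ∈ O.gen, ∀ G : 𝕏 → X, IntegrableOn G B 𝔪 → (∫ x in B, G x ∂𝔪) = 0)
    (F : 𝕏 → X) (hF : Integrable F 𝔪) : (∫ x, F x ∂𝔪) = 0 := by
  obtain ⟨c, hcg, hcu⟩ := O.gen_covers
  set W : ℕ → Set 𝕏 := fun n => ⋃ (j : ℕ) (_ : j < n), c j with hW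
  set P : ℕ → Set 𝕏 := fun n => c n \ W n with hP
  have hWm : ∀ n, MeasurableSet (W n) := fun n =>
    MeasurableSet.iUnion fun j => MeasurableSet.iUnion fun _ => O.gen_meas _ (hcg j)
  have hPm : ∀ n, MeasurableSet (P n) := fun n => (O.gen_meas _ (hcg n)).diff (hWm n)
  have hsubW : ∀ {j n : ℕ}, j < n → c j ⊆ W n := fun {j n} hjn x hx =>
    mem_iUnion.mpr ⟨j, mem_iUnion.mpr ⟨hjn, hx⟩⟩
  have hPdisj : Pairwise (Function.onFun Disjoint P) := by
    have key : ∀ {a b : ℕ}, a < b → Disjoint (P a) (P b) := by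
      intro a b hab
      refine Set.disjoint_left.mpr fun x hxa hxb => ?_
      exact hxb.2 (hsubW hab hxa.1)
    intro a b hab
    rcases lt_or_gt_of_ne hab with h | h
    · exact key h
    · exact (key h).symm
  have hPcov : ⋃ n, P n = Set.univ := by
    refine Set.eq_univ_of_forall fun x => ?_
    have hx : x ∈ ⋃ n, c n := by rw [hcu]; trivial
    have hex : ∃ n, x ∈ c n := mem_iUnion.mp hx
    classical
    refine mem_iUnion.mpr ⟨Nat.find hex, Nat.find_spec hex, fun hxW => ?_⟩
    obtain ⟨j, hj⟩ := mem_iUnion.mp hxW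
    obtain ⟨hjlt, hxj⟩ := mem_iUnion.mp hj
    exact Nat.find_min hex hjlt hxj
  have hzero : ∀ n, (∫ x in P n, F x ∂𝔪) = 0 := by
    intro n
    have hind : (∫ x in c n, ((W n)ᶜ.indicator F) x ∂𝔪) = ∫ x in P n, F x ∂𝔪 := by
      rw [setIntegral_indicator (hWm n).compl]
      rw [← Set.diff_eq]
    rw [← hind]
    exact hi (c n) (hcg n) _ ((hF.indicator (hWm n).compl).integrableOn)
  have hsum : HasSum (fun n => ∫ x in P n, F x ∂𝔪) (∫ x in ⋃ n, P n, F x ∂𝔪) :=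
    hasSum_integral_iUnion hPm hPdisj hF.integrableOn
  simp only [hzero] at hsum
  have : (∫ x in ⋃ n, P n, F x ∂𝔪) = 0 := hsum.unique hasSum_zero
  rwa [hPcov, setIntegral_univ] at this

lemma aux_ofReal_inv_two_pow (n : ℕ) : ENNReal.ofReal ((2⁻¹:ℝ) ^ n) = (2⁻¹:ℝ≥0∞) ^ n := by
  rw [ENNReal.ofReal_pow (by norm_num)]
  congr 1
  rw [ENNReal.ofReal_inv_of_pos (by norm_num)]
  norm_num

lemma aux_integral_zero_of_lpNorm_zero (𝔪 : Measure 𝕏)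
    (hac : ∀ A : Set 𝕏, MeasurableSet A → O.outerMeasure A = 0 → 𝔪 A = 0)
    (F : 𝕏 → X) (hA : O.lpNorm 1 F = 0) : (∫ x, F x ∂𝔪) = 0 := by
  classical
  have hganti : ∀ {a b : ℝ≥0∞}, a ≤ b → O.superLevel F b ≤ O.superLevel F a :=
    fun h => O.aux_superLevel_anti h
  have hsl : ∀ t : ℝ, 0 < t → O.superLevel F (ENNReal.ofReal t) = 0 := by
    intro t ht
    have h1 := aux_mul_le_lintegral (fun lam => O.superLevel F lam) hganti ht
    rw [← O.aux_lpNorm_one, hA, nonpos_iff_eq_zero] at h1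
    rcases mul_eq_zero.mp h1 with h | h
    · exact absurd h (by simp [ENNReal.ofReal_eq_zero]; linarith)
    · exact h
  have hsel : ∀ n : ℕ, ∃ c : ℕ → Set 𝕏, (∀ i, c i ∈ O.gen) ∧
      O.outerSize (Set.indicator (⋃ i, c i)ᶜ F) ≤ (2⁻¹:ℝ≥0∞) ^ n ∧
      ∑' i, O.lm (c i) ≤ (2⁻¹:ℝ≥0∞) ^ n := by
    intro n
    have hpos : (0:ℝ) < (2⁻¹:ℝ) ^ n := by positivity
    have hlt : O.superLevel F (ENNReal.ofReal ((2⁻¹:ℝ)^n)) < (2⁻¹:ℝ≥0∞)^n := by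
      rw [hsl _ hpos]
      exact ENNReal.pow_pos (by norm_num) n
    obtain ⟨c, h1, h2, h3⟩ := O.aux_select hlt
    exact ⟨c, h1, by rwa [aux_ofReal_inv_two_pow] at h2, h3.le⟩
  choose c hcg hcsize hcsum using hsel
  set V' : ℕ → Set 𝕏 := fun n => ⋃ i, c n i with hV'
  have hV'u : ∀ n, V' n ∈ O.unions := fun n => ⟨c n, hcg n, rfl⟩
  set Wm : ℕ → Set 𝕏 := fun m => ⋃ n : ℕ, V' (m + n) with hWmdef
  have hWmu : ∀ m, Wm m ∈ O.unions := fun m => O.aux_unions_iUnion _ (fun n => hV'u (m+n))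
  have hvanish : ∀ m, Set.indicator (Wm m)ᶜ F = 0 := by
    intro m
    refine O.aux_vanish (hWmu m) fun δ hδ => ?_
    obtain ⟨n₀, hn₀⟩ := ENNReal.exists_inv_two_pow_lt hδ.ne'
    refine ⟨V' (m + n₀), hV'u _, subset_iUnion (fun n => V' (m+n)) n₀, ?_⟩
    refine le_trans (hcsize (m+n₀)) (le_trans ?_ hn₀.le)
    exact pow_le_pow_of_le_one zero_le (ENNReal.inv_le_one.mpr one_le_two)
      (Nat.le_add_left n₀ m)
  set N : Set 𝕏 := ⋂ m, Wm m with hNdef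
  have hNm : MeasurableSet N := MeasurableSet.iInter fun m => O.aux_meas_of_unions (hWmu m)
  have hNle : ∀ m : ℕ, O.outerMeasure N ≤ 2 * (2⁻¹:ℝ≥0∞)^m := by
    intro m
    have step := O.aux_outerMeasure_le_tsum (E := N) (v := fun n => V' (m+n))
      (b := fun n => (2⁻¹:ℝ≥0∞)^(m+n))
      (Set.iInter_subset _ m)
      (fun n => ⟨c (m+n), hcg _, le_of_eq rfl, hcsum (m+n)⟩)
    refine le_trans step ?_
    rw [tsum_congr (fun n => pow_add (2⁻¹:ℝ≥0∞) m n), ENNReal.tsum_mul_left,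
      ENNReal.tsum_geometric, ENNReal.one_sub_inv_two, inv_inv, mul_comm]
  have hN0 : O.outerMeasure N = 0 := aux_eq_zero_of_le_geom (by norm_num) hNle
  have h𝔪N : 𝔪 N = 0 := hac N hNm hN0
  have hae : F =ᵐ[𝔪] 0 := by
    rw [Filter.eventuallyEq_iff_exists_mem]
    refine ⟨Nᶜ, ?_, fun x hx => ?_⟩
    · rw [mem_ae_iff, compl_compl]; exact h𝔪N
    · obtain ⟨m, hm⟩ := mem_iUnion.mp ((compl_iInter _).subst (motive := fun s => x ∈ s) hx)
      have := congrFun (hvanish m) x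
      simpa [Set.indicator_of_mem hm] using this
  simpa using integral_eq_zero_of_ae hae

lemma aux_main (𝔪 : Measure 𝕏) (C : ℝ≥0∞)
    (hi : ∀ B ∈ O.gen, ∀ G : 𝕏 → X, IntegrableOn G B 𝔪 →
      ENNReal.ofReal ‖∫ x in B, G x ∂𝔪‖ ≤ C * O.size B G * O.lm B)
    (hac : ∀ A : Set 𝕏, MeasurableSet A → O.outerMeasure A = 0 → 𝔪 A = 0)
    (F : 𝕏 → X) (hF : Integrable F 𝔪)
    (hC : C ≠ ⊤) (hA : O.lpNorm 1 F ≠ ⊤) :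
    ENNReal.ofReal ‖∫ x, F x ∂𝔪‖ ≤ 4 * C * O.lpNorm 1 F := by
  classical
  set A := O.lpNorm 1 F with hAdef
  suffices hsuf : ∀ ε : ℝ≥0∞, 0 < ε → ε ≠ ⊤ →
      ENNReal.ofReal ‖∫ x, F x ∂𝔪‖ ≤ 4 * C * A + 4 * C * ε by
    by_cases hC0 : C = 0
    · simpa [hC0] using hsuf 1 zero_lt_one one_ne_top
    refine ENNReal.le_of_forall_pos_le_add fun δ hδ hlt => ?_
    have h4C0 : (4:ℝ≥0∞) * C ≠ 0 := by simp [hC0]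
    have h4Ct : (4:ℝ≥0∞) * C ≠ ⊤ := ENNReal.mul_ne_top (by norm_num) hC
    have hε0 : (0:ℝ≥0∞) < (δ:ℝ≥0∞) / (4 * C) :=
      ENNReal.div_pos (by exact_mod_cast hδ.ne') h4Ct
    have hεt : (δ:ℝ≥0∞) / (4 * C) ≠ ⊤ := (ENNReal.div_lt_top coe_ne_top h4C0).ne
    calc ENNReal.ofReal ‖∫ x, F x ∂𝔪‖ ≤ 4*C*A + 4*C*((δ:ℝ≥0∞)/(4*C)) := hsuf _ hε0 hεt
      _ = 4*C*A + δ := by rw [ENNReal.mul_div_cancel h4C0 h4Ct]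
  intro ε hε hεt
  have hganti : ∀ {a b : ℝ≥0∞}, a ≤ b → O.superLevel F b ≤ O.superLevel F a :=
    fun h => O.aux_superLevel_anti h
  set g : ℤ → ℝ≥0∞ := fun k => O.superLevel F (ENNReal.ofReal ((2:ℝ)^k)) with hgdef
  have hfin : ∀ k : ℤ, (2:ℝ≥0∞)^k * g k ≤ A := by
    intro k
    rw [hAdef, O.aux_lpNorm_one, ← aux_ofReal_two_zpow]
    exact aux_mul_le_lintegral (fun lam => O.superLevel F lam) hganti
      (zpow_pos (by norm_num) k)
  have hz0 : ∀ k : ℤ, ((2:ℝ≥0∞)^k) ≠ 0 :=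
    fun k => (ENNReal.zpow_pos (by norm_num) (by norm_num) k).ne'
  have hgfin : ∀ k, g k ≠ ⊤ := by
    intro k hk
    apply hA
    have h2 := hfin k
    rw [hk, ENNReal.mul_top (hz0 k)] at h2
    exact top_le_iff.mp h2
  have hgle : ∀ k, g k ≤ A * (2:ℝ≥0∞)^(-k) := by
    intro k
    have h1 : g k = (2:ℝ≥0∞)^(-k) * ((2:ℝ≥0∞)^k * g k) := by
      rw [← mul_assoc, ← ENNReal.zpow_add (by norm_num) (by norm_num)]
      simp
    rw [h1]
    exact (mul_le_mul' le_rfl (hfin k)).trans_eq (mul_comm _ _)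
  set r : ℤ → ℝ≥0∞ := fun k => (2⁻¹:ℝ≥0∞) ^ ((Denumerable.eqv ℤ) k + 1) with hrdef
  have hrpos : ∀ k, 0 < r k := fun k => ENNReal.pow_pos (by norm_num) _
  have hrle : ∀ k, r k ≤ 1 := fun k => pow_le_one' (ENNReal.inv_le_one.mpr one_le_two) _
  have hrsum : ∑' k : ℤ, r k ≤ 1 := by
    calc ∑' k : ℤ, r k ≤ ∑' n : ℕ, (2⁻¹:ℝ≥0∞) ^ (n+1) :=
        ENNReal.tsum_comp_le_tsum_of_injective (Denumerable.eqv ℤ).injective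
          (fun n => (2⁻¹:ℝ≥0∞) ^ (n+1))
      _ = 2⁻¹ * (1 - 2⁻¹)⁻¹ := ENNReal.tsum_geometric_add_one 2⁻¹
      _ = 1 := by
          rw [ENNReal.one_sub_inv_two, inv_inv]
          exact ENNReal.inv_mul_cancel (by norm_num) (by norm_num)
  set εk : ℤ → ℝ≥0∞ := fun k => ε * (2:ℝ≥0∞)^(-k) * r k with hεkdef
  have hεkpos : ∀ k, εk k ≠ 0 := fun k =>
    mul_ne_zero (mul_ne_zero hε.ne' (hz0 (-k))) (hrpos k).ne'
  have hεk2 : ∀ k, (2:ℝ≥0∞)^k * εk k = ε * r k := by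
    intro k
    have h1 : (2:ℝ≥0∞)^k * (ε * (2:ℝ≥0∞)^(-k) * r k)
        = (2:ℝ≥0∞)^k * (2:ℝ≥0∞)^(-k) * (ε * r k) := by ring
    rw [hεkdef, h1, ← ENNReal.zpow_add (by norm_num) (by norm_num)]
    simp
  have hεkle : ∀ k, εk k ≤ ε * (2:ℝ≥0∞)^(-k) := by
    intro k
    calc εk k = ε * (2:ℝ≥0∞)^(-k) * r k := rfl
      _ ≤ ε * (2:ℝ≥0∞)^(-k) * 1 := mul_le_mul' le_rfl (hrle k)
      _ = ε * (2:ℝ≥0∞)^(-k) := mul_one _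
  have hsel : ∀ k : ℤ, ∃ c : ℕ → Set 𝕏, (∀ i, c i ∈ O.gen) ∧
      O.outerSize (Set.indicator (⋃ i, c i)ᶜ F) ≤ ENNReal.ofReal ((2:ℝ)^k) ∧
      ∑' i, O.lm (c i) ≤ g k + εk k := by
    intro k
    have hlt : O.superLevel F (ENNReal.ofReal ((2:ℝ)^k)) < g k + εk k :=
      ENNReal.lt_add_right (hgfin k) (hεkpos k)
    obtain ⟨c, h1, h2, h3⟩ := O.aux_select hlt
    exact ⟨c, h1, h2, h3.le⟩
  choose c hcg hcsize hcsum using hsel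
  set V' : ℤ → Set 𝕏 := fun k => ⋃ i, c k i with hV'def
  have hV'u : ∀ k, V' k ∈ O.unions := fun k => ⟨c k, hcg k, rfl⟩
  have hbk : ∀ k : ℤ, ∑' i, O.lm (c k i) ≤ (A + ε) * (2:ℝ≥0∞)^(-k) := by
    intro k
    refine (hcsum k).trans ?_
    calc g k + εk k ≤ A * (2:ℝ≥0∞)^(-k) + ε * (2:ℝ≥0∞)^(-k) := add_le_add (hgle k) (hεkle k)
      _ = (A+ε) * (2:ℝ≥0∞)^(-k) := (add_mul A ε _).symm
  set U : ℤ → Set 𝕏 := fun j => ⋃ n : ℕ, V' (j + n) with hUdef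
  have hUu : ∀ j, U j ∈ O.unions := fun j => O.aux_unions_iUnion _ (fun n => hV'u _)
  have hUm : ∀ j, MeasurableSet (U j) := fun j => O.aux_meas_of_unions (hUu j)
  have hVU : ∀ {j k : ℤ}, j ≤ k → V' k ⊆ U j := by
    intro j k hjk x hx
    have hk : j + (((k - j).toNat : ℤ)) = k := by
      rw [Int.toNat_of_nonneg (sub_nonneg.mpr hjk)]; ring
    exact mem_iUnion.mpr ⟨(k - j).toNat, by rw [hk]; exact hx⟩
  have hUb : ∀ (j : ℤ) (E : Set 𝕏), E ⊆ U j →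
      O.outerMeasure E ≤ (A + ε) * 2 * (2:ℝ≥0∞)^(-j) := by
    intro j E hE
    have step := O.aux_outerMeasure_le_tsum (E := E) (v := fun n : ℕ => V' (j + n))
      (b := fun n : ℕ => (A + ε) * (2:ℝ≥0∞)^(-(j + (n:ℤ))))
      hE (fun n => ⟨c (j + n), hcg _, le_of_eq rfl, hbk (j+n)⟩)
    refine step.trans ?_
    rw [ENNReal.tsum_mul_left, aux_tsum_geom_shift j]
    exact le_of_eq (by ring)
  set N : Set 𝕏 := ⋂ m : ℕ, U (m : ℤ) with hNdef
  have hNmeas : MeasurableSet N := MeasurableSet.iInter fun m => hUm _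
  have hN0 : O.outerMeasure N = 0 := by
    refine aux_eq_zero_of_le_geom (Cst := (A+ε)*2)
      (ENNReal.mul_ne_top (ENNReal.add_ne_top.mpr ⟨hA, hεt⟩) (by norm_num)) fun m => ?_
    have h2 := hUb (m:ℤ) N (iInter_subset _ m)
    rwa [aux_zpow_neg_nat m] at h2
  have h𝔪N : 𝔪 N = 0 := hac N hNmeas hN0
  set Vall : Set 𝕏 := ⋃ k : ℤ, V' k with hValldef
  have hVallu : Vall ∈ O.unions := O.aux_unions_iUnion _ hV'u
  have hvanish : Set.indicator Vallᶜ F = 0 := by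
    refine O.aux_vanish hVallu fun δ hδ => ?_
    obtain ⟨n₀, hn₀⟩ := ENNReal.exists_inv_two_pow_lt hδ.ne'
    refine ⟨V' (-(n₀:ℤ)), hV'u _, subset_iUnion V' _, ?_⟩
    refine (hcsize _).trans ?_
    rw [aux_ofReal_two_zpow, aux_zpow_neg_nat]
    exact hn₀.le
  set Wf : ℤ × ℕ → ℕ → Set 𝕏 := fun p n => if n < p.2 then c p.1 n else U (p.1 + 1)
    with hWfdef
  set W : ℤ × ℕ → Set 𝕏 := fun p => ⋃ n, Wf p n with hWdef
  have hWu : ∀ p, W p ∈ O.unions := by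
    intro p
    refine O.aux_unions_iUnion _ (fun n => ?_)
    by_cases h : n < p.2
    · simp only [hWfdef, if_pos h]; exact O.aux_mem_unions_of_gen (hcg _ _)
    · simp only [hWfdef, if_neg h]; exact hUu _
  have hWmeas : ∀ p, MeasurableSet (W p) := fun p => O.aux_meas_of_unions (hWu p)
  have hUW : ∀ p : ℤ × ℕ, U (p.1 + 1) ⊆ W p := by
    intro p x hx
    refine mem_iUnion.mpr ⟨p.2, ?_⟩
    simp only [hWfdef, if_neg (lt_irrefl p.2)]
    exact hx
  have hcWsub : ∀ (p : ℤ × ℕ) (j : ℕ), j < p.2 → c p.1 j ⊆ W p := by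
    intro p j hj x hx
    refine mem_iUnion.mpr ⟨j, ?_⟩
    simp only [hWfdef, if_pos hj]
    exact hx
  set P : ℤ × ℕ → Set 𝕏 := fun p => c p.1 p.2 \ W p with hPdef
  have hPm : ∀ p, MeasurableSet (P p) := fun p => (O.gen_meas _ (hcg p.1 p.2)).diff (hWmeas p)
  have hPdisj : Pairwise (Function.onFun Disjoint P) := by
    have key : ∀ p q : ℤ × ℕ, p.1 < q.1 ∨ (p.1 = q.1 ∧ p.2 < q.2) → Disjoint (P p) (P q) := by
      intro p q hpq
      refine Set.disjoint_left.mpr fun x hxp hxq => ?_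
      rcases hpq with h | ⟨h1, h2⟩
      · apply hxp.2
        apply hUW p
        apply hVU (by omega : p.1 + 1 ≤ q.1)
        exact mem_iUnion.mpr ⟨q.2, hxq.1⟩
      · apply hxq.2
        apply hcWsub q p.2 h2
        rw [← h1]
        exact hxp.1
    intro p q hpq
    rcases lt_trichotomy p.1 q.1 with h | h | h
    · exact key p q (Or.inl h)
    · rcases lt_or_gt_of_ne (fun h2 : p.2 = q.2 => hpq (Prod.ext h h2)) with h2 | h2
      · exact key p q (Or.inr ⟨h, h2⟩)
      · exact (key q p (Or.inr ⟨h.symm, h2⟩)).symm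
    · exact (key q p (Or.inl h)).symm
  have hcov : ∀ x, F x ≠ 0 → x ∉ N → x ∈ ⋃ p, P p := by
    intro x hFx hxN
    have hxV : x ∈ Vall := by
      by_contra hx
      have h2 := congrFun hvanish x
      rw [Set.indicator_of_mem (Set.mem_compl hx)] at h2
      exact hFx (by simpa using h2)
    obtain ⟨m, hm⟩ : ∃ m : ℕ, x ∉ U (m:ℤ) := by
      by_contra h; push_neg at h; exact hxN (mem_iInter.mpr h)
    have hnotup : ∀ k : ℤ, (m:ℤ) ≤ k → x ∉ V' k := fun k hk hxk => hm (hVU hk hxk)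
    obtain ⟨k0, hk0⟩ := mem_iUnion.mp hxV
    have hex : ∃ n : ℕ, x ∈ V' ((m:ℤ) - 1 - n) := by
      have hk0m : k0 < (m:ℤ) := by
        by_contra h; push_neg at h; exact hnotup k0 h hk0
      refine ⟨((m:ℤ) - 1 - k0).toNat, ?_⟩
      rw [Int.toNat_of_nonneg (by omega), show (m:ℤ) - 1 - ((m:ℤ) - 1 - k0) = k0 by ring]
      exact hk0
    set n1 := Nat.find hex with hn1
    set k1 : ℤ := (m:ℤ) - 1 - n1 with hk1def
    have hxk1 : x ∈ V' k1 := Nat.find_spec hex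
    have hmax : ∀ k : ℤ, k1 < k → x ∉ V' k := by
      intro k hk hxk
      rcases le_or_gt (m:ℤ) k with h | h
      · exact hnotup k h hxk
      · have hnn : (0:ℤ) ≤ (m:ℤ) - 1 - k := by omega
        have hn : ((m:ℤ) - 1 - k).toNat < n1 := by
          have h3 := Int.toNat_of_nonneg hnn
          omega
        apply Nat.find_min hex hn
        rw [Int.toNat_of_nonneg hnn, show (m:ℤ) - 1 - ((m:ℤ) - 1 - k) = k by ring]
        exact hxk
    have hxnotU : x ∉ U (k1 + 1) := by
      intro hxU
      obtain ⟨n, hn⟩ := mem_iUnion.mp hxU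
      exact hmax (k1 + 1 + n) (by omega) hn
    have hex2 : ∃ i : ℕ, x ∈ c k1 i := mem_iUnion.mp hxk1
    refine mem_iUnion.mpr ⟨(k1, Nat.find hex2), Nat.find_spec hex2, ?_⟩
    intro hxW
    obtain ⟨n, hn⟩ := mem_iUnion.mp hxW
    by_cases h : n < Nat.find hex2
    · simp only [hWfdef, if_pos h] at hn
      exact Nat.find_min hex2 h hn
    · simp only [hWfdef, if_neg h] at hn
      exact hxnotU hn
  have hPunion_meas : MeasurableSet (⋃ p, P p) := MeasurableSet.iUnion hPm
  have hFae : F =ᵐ[𝔪] (⋃ p, P p).indicator F := by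
    rw [Filter.EventuallyEq, ae_iff]
    refine measure_mono_null ?_ h𝔪N
    intro x hx
    by_contra hxN
    apply hx
    by_cases hxP : x ∈ ⋃ p, P p
    · rw [Set.indicator_of_mem hxP]
    · rw [Set.indicator_of_notMem hxP]
      by_contra hFx
      exact hxP (hcov x hFx hxN)
  have hint : (∫ x, F x ∂𝔪) = ∫ x in ⋃ p, P p, F x ∂𝔪 := by
    rw [integral_congr_ae hFae, integral_indicator hPunion_meas]
  have hHasSum : HasSum (fun p : ℤ × ℕ => ∫ x in P p, F x ∂𝔪) (∫ x in ⋃ p, P p, F x ∂𝔪) :=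
    hasSum_integral_iUnion hPm hPdisj hF.integrableOn
  have hnorm : ENNReal.ofReal ‖∫ x, F x ∂𝔪‖ ≤
      ∑' p : ℤ × ℕ, ENNReal.ofReal ‖∫ x in P p, F x ∂𝔪‖ := by
    rw [hint]; exact aux_ofReal_norm_tsum_le hHasSum
  have hpiece : ∀ p : ℤ × ℕ, ENNReal.ofReal ‖∫ x in P p, F x ∂𝔪‖ ≤
      C * (2:ℝ≥0∞)^(p.1+1) * O.lm (c p.1 p.2) := by
    intro p
    have hindint : (∫ x in c p.1 p.2, ((W p)ᶜ.indicator F) x ∂𝔪) = ∫ x in P p, F x ∂𝔪 := by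
      rw [setIntegral_indicator (hWmeas p).compl, ← Set.diff_eq]
    rw [← hindint]
    refine (hi (c p.1 p.2) (hcg p.1 p.2) _
      ((hF.indicator (hWmeas p).compl).integrableOn)).trans ?_
    have hsz : O.size (c p.1 p.2) ((W p)ᶜ.indicator F) ≤ (2:ℝ≥0∞)^(p.1+1) := by
      have h1 : V' (p.1+1) ⊆ W p := (hVU (le_refl (p.1+1))).trans (hUW p)
      refine (O.aux_size_indicator_le (hcg p.1 p.2) (hWu p) h1 F).trans ?_
      refine (hcsize (p.1+1)).trans ?_
      rw [aux_ofReal_two_zpow]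
    exact mul_le_mul' (mul_le_mul' le_rfl hsz) le_rfl
  refine hnorm.trans ((ENNReal.tsum_le_tsum hpiece).trans ?_)
  have htsumg : ∑' k : ℤ, (2:ℝ≥0∞)^k * g k ≤ 2 * A := by
    have h1 := aux_tsum_zpow_le (fun lam => O.superLevel F lam) hganti
    rw [← O.aux_lpNorm_one] at h1
    exact h1
  have htsumε : ∑' k : ℤ, (2:ℝ≥0∞)^k * εk k ≤ ε := by
    rw [tsum_congr hεk2, ENNReal.tsum_mul_left]
    calc ε * ∑' k, r k ≤ ε * 1 := mul_le_mul' le_rfl hrsum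
      _ = ε := mul_one _
  calc ∑' p : ℤ × ℕ, C * (2:ℝ≥0∞)^(p.1+1) * O.lm (c p.1 p.2)
      = ∑' (k : ℤ) (i : ℕ), C * (2:ℝ≥0∞)^(k+1) * O.lm (c k i) :=
        ENNReal.tsum_prod (f := fun k i => C * (2:ℝ≥0∞)^(k+1) * O.lm (c k i))
    _ = ∑' k : ℤ, C * (2:ℝ≥0∞)^(k+1) * ∑' i, O.lm (c k i) :=
        tsum_congr fun k => ENNReal.tsum_mul_left
    _ ≤ ∑' k : ℤ, C * (2:ℝ≥0∞)^(k+1) * (g k + εk k) :=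
        ENNReal.tsum_le_tsum fun k => mul_le_mul' le_rfl (hcsum k)
    _ = 2 * C * ∑' k : ℤ, ((2:ℝ≥0∞)^k * g k + (2:ℝ≥0∞)^k * εk k) := by
        rw [← ENNReal.tsum_mul_left]
        refine tsum_congr fun k => ?_
        rw [ENNReal.zpow_add (by norm_num) (by norm_num) k 1, zpow_one]
        ring
    _ = 2 * C * ((∑' k : ℤ, (2:ℝ≥0∞)^k * g k) + ∑' k : ℤ, (2:ℝ≥0∞)^k * εk k) := by
        rw [ENNReal.tsum_add]
    _ ≤ 2 * C * (2 * A + ε) := by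
        refine mul_le_mul' le_rfl (add_le_add htsumg htsumε)
    _ = 4*C*A + 2*(C*ε) := by ring
    _ ≤ 4*C*A + 4*(C*ε) := by
        gcongr
        norm_num
    _ = 4*C*A + 4*C*ε := by ring

end OuterSpace

/-- Radon–Nikodym-type domination: if a Borel measure `𝔪` is controlled on
generating sets by `C ‖F‖_{S(B)} μ(B)` and is absolutely continuous with respect to the outer
measure, then `‖∫ F d𝔪‖ ≲ C ‖F‖_{L¹_μ S}`. -/
theorem statement16 :
    ∃ cc : ℝ≥0∞, cc ≠ ⊤ ∧
      ∀ (𝕏 : Type u) [MeasurableSpace 𝕏] (X : Type v)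
        [NormedAddCommGroup X] [NormedSpace ℝ X] [CompleteSpace X]
        (O : OuterSpace 𝕏 X),
        (∃ c : ℕ → Set 𝕏, (⋃ n, c n) = Set.univ ∧ ∀ n, O.outerMeasure (c n) ≠ ⊤) →
        ∀ (𝔪 : Measure 𝕏) (C : ℝ≥0∞),
          (∀ B ∈ O.gen, ∀ F : 𝕏 → X, IntegrableOn F B 𝔪 →
            ENNReal.ofReal ‖∫ x in B, F x ∂𝔪‖ ≤ C * O.size B F * O.lm B) →
          (∀ A : Set 𝕏, MeasurableSet A → O.outerMeasure A = 0 → 𝔪 A = 0) →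
          ∀ F : 𝕏 → X, Integrable F 𝔪 →
            ENNReal.ofReal ‖∫ x, F x ∂𝔪‖ ≤ cc * C * O.lpNorm 1 F := by
  refine ⟨4, by norm_num, ?_⟩
  intro 𝕏 _ X _ _ _ O _hσ 𝔪 C hi hac F hF
  by_cases hC0 : C = 0
  · have hzero : ∀ B ∈ O.gen, ∀ G : 𝕏 → X, IntegrableOn G B 𝔪 → (∫ x in B, G x ∂𝔪) = 0 := by
      intro B hB G hG
      have h1 := hi B hB G hG
      rw [hC0, zero_mul, zero_mul, nonpos_iff_eq_zero] at h1
      exact norm_le_zero_iff.mp (ENNReal.ofReal_eq_zero.mp h1)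
    rw [O.aux_integral_zero_of_vanishing 𝔪 hzero F hF]
    simp
  by_cases hA0 : O.lpNorm 1 F = 0
  · rw [O.aux_integral_zero_of_lpNorm_zero 𝔪 hac F hA0]
    simp
  by_cases hCt : C = ⊤
  · have htop : (4:ℝ≥0∞) * C * O.lpNorm 1 F = ⊤ := by
      rw [hCt, ENNReal.mul_top (by norm_num), ENNReal.top_mul hA0]
    rw [htop]; exact le_top
  by_cases hAt : O.lpNorm 1 F = ⊤
  · have htop : (4:ℝ≥0∞) * C * O.lpNorm 1 F = ⊤ := by
      rw [hAt, ENNReal.mul_top (mul_ne_zero (by norm_num) hC0)]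
    rw [htop]; exact le_top
  exact O.aux_main 𝔪 C hi hac F hF hCt hAt
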